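/- Let R be an m×n matrix over 𝔽₂ and let R′ be obtained from R by a collision-resolving addition (replacing column i of R by column i + column j, where j < i and both columns are nonzero with low(R,j) = low(R,i)). Then the set of low values of nonzero columns of R′ contains the set of low values of nonzero columns of R. (Consequently, if the row of an index ℓ contains the lowest nonzero entry of at least one column at some stage of the reduction, it keeps this property until the end of the reduction; this justifies clearing decisions made before the reduction has finished.) -/

import Mathlib

open Matrix

/-- The `low` of column `j` of `R`: the largest row index `i` with `R i j ≠ 0`,
or `⊥` if the column is zero. -/
def low {m n : ℕ} (R : Matrix (Fin m) (Fin n) (ZMod 2)) (j : Fin n) : WithBot (Fin m) :=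
  (Finset.univ.filter fun i => R i j ≠ 0).max

/-- `R` is reduced if no two distinct nonzero columns have equal lows. -/
def Reduced {m n : ℕ} (R : Matrix (Fin m) (Fin n) (ZMod 2)) : Prop :=
  ∀ j₁ j₂ : Fin n, low R j₁ ≠ ⊥ → low R j₁ = low R j₂ → j₁ = j₂

/-- A square matrix is upper triangular if `V i j = 0` whenever `i > j`. -/
def UpperTri {k : ℕ} (V : Matrix (Fin k) (Fin k) (ZMod 2)) : Prop :=
  ∀ i j : Fin k, j < i → V i j = 0

/-- A collision-resolving addition: column `i` of `R` is replaced by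
(column `i`) + (column `j`) for some `j < i` with both columns nonzero and
`low R j = low R i`. -/
def CollStep {m n : ℕ} (R R' : Matrix (Fin m) (Fin n) (ZMod 2)) : Prop :=
  ∃ i j : Fin n, j < i ∧ low R j ≠ ⊥ ∧ low R i ≠ ⊥ ∧ low R j = low R i ∧
    R' = R.updateCol i (fun k => R k i + R k j)

/-- collision-resolving additions never lose low values. -/
theorem stmt_6 {m n : ℕ} (R R' : Matrix (Fin m) (Fin n) (ZMod 2))
    (h : CollStep R R') :
    ∀ ℓ : Fin m, (∃ c : Fin n, low R c = ↑ℓ) → ∃ c' : Fin n, low R' c' = ↑ℓ := by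
  obtain ⟨i, j, hji, hj, hi, hlow, rfl⟩ := h
  intro ℓ ⟨c, hc⟩
  by_cases hci : c = i
  · refine ⟨j, ?_⟩
    have : low (R.updateCol i (fun k => R k i + R k j)) j = low R j := by
      unfold low
      congr 1
      ext k
      simp [Matrix.updateCol_apply, hji.ne]
    rw [this, hlow, ← hci, hc]
  · refine ⟨c, ?_⟩
    have : low (R.updateCol i (fun k => R k i + R k j)) c = low R c := by
      unfold low
      congr 1
      ext k
      simp [Matrix.updateCol_apply, hci]
    rw [this, hc]
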